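/- Depth-first search with a visited set along the current path finds exactly the simple (loop-free) paths to goal states: in a finite directed graph with initial node s and goal predicate G, the set of paths returned by the recursive procedure (which skips nodes on the current recursion path and returns a path as soon as its endpoint satisfies G, without extending it) equals the set of paths from s that end at a G-node, contain no repeated node, and have no proper prefix ending at a G-node. -/

import Mathlib

variable {V : Type} [Fintype V] [DecidableEq V]

/-- Depth-first search collecting paths: skips nodes on the current recursion
path (the visited set), returns the current path as soon as its endpoint
satisfies the goal (without extending it), and otherwise recurses on the
successors. -/
def dfs [Fintype V] (E : V → Finset V) (G : V → Bool)
    (visited : Finset V) (path : List V) (v : V) : Finset (List V) :=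
  if hv : v ∈ visited then ∅
  else if G v then {path ++ [v]}
  else (E v).biUnion (fun w => dfs E G (insert v visited) (path ++ [v]) w)
termination_by (Finset.univ \ visited).card
decreasing_by
  apply Finset.card_lt_card
  constructor
  · exact Finset.sdiff_subset_sdiff (Finset.Subset.refl _) (Finset.subset_insert _ _)
  · intro hsub
    have := hsub (Finset.mem_sdiff.mpr ⟨Finset.mem_univ v, hv⟩)
    simp at this

/-- A simple minimal goal path from s: starts at s, follows edges, has no
repeated node, ends at a goal node, and no proper prefix ends at a goal
node. -/
def IsSimpleMinimalGoalPath (E : V → Finset V) (G : V → Bool) (s : V)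
    (p : List V) : Prop :=
  p.head? = some s ∧
  p.Chain' (fun a b => b ∈ E a) ∧
  p.Nodup ∧
  (∃ last, p.getLast? = some last ∧ G last = true) ∧
  (∀ v ∈ p.dropLast, G v = false)

lemma dfs_mem (E : V → Finset V) (G : V → Bool)
    (visited : Finset V) (path : List V) (v : V) (p : List V) :
    p ∈ dfs E G visited path v ↔
      ∃ q : List V, p = path ++ q ∧ q.head? = some v ∧
        q.Chain' (fun a b => b ∈ E a) ∧ q.Nodup ∧
        (∀ x ∈ q, x ∉ visited) ∧
        (∃ last, q.getLast? = some last ∧ G last = true) ∧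
        (∀ x ∈ q.dropLast, G x = false) := by
  rw [dfs]
  split_ifs with hv hg
  · simp only [Finset.notMem_empty, false_iff]
    rintro ⟨q, rfl, hh, -, -, hdisj, -⟩
    match q, hh with
    | x :: t, hh =>
      simp only [List.head?_cons, Option.some.injEq] at hh
      exact hdisj x (by simp) (hh ▸ hv)
  · simp only [Finset.mem_singleton]
    constructor
    · rintro rfl
      exact ⟨[v], rfl, rfl, List.isChain_singleton _, by simp, by simpa using hv,
        ⟨v, rfl, hg⟩, by simp⟩
    · rintro ⟨q, rfl, hh, -, -, -, ⟨l, hl, hGl⟩, hm⟩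
      match q, hh with
      | x :: t, hh =>
        simp only [List.head?_cons, Option.some.injEq] at hh
        subst hh
        match t with
        | [] => rfl
        | b :: t' =>
          have hx : G x = false := hm x (by simp)
          rw [hx] at hg
          simp at hg
  · rw [Finset.mem_biUnion]
    constructor
    · rintro ⟨w, hw, hp⟩
      rw [dfs_mem] at hp
      obtain ⟨q', rfl, hh', hc', hn', hd', ⟨l, hl, hGl⟩, hm'⟩ := hp
      match q', hh' with
      | b :: t', hh' =>
        simp only [List.head?_cons, Option.some.injEq] at hh'
        subst hh'
        refine ⟨v :: b :: t', by simp, rfl, ?_, ?_, ?_, ⟨l, by simpa using hl, hGl⟩, ?_⟩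
        · exact List.isChain_cons_cons.mpr ⟨hw, hc'⟩
        · refine List.nodup_cons.mpr ⟨fun hvm => ?_, hn'⟩
          exact hd' v hvm (Finset.mem_insert_self _ _)
        · intro x hx
          rcases List.mem_cons.mp hx with rfl | hx
          · exact hv
          · exact fun hxv => hd' x hx (Finset.mem_insert_of_mem hxv)
        · intro x hx
          simp only [List.dropLast_cons₂, List.mem_cons] at hx
          rcases hx with rfl | hx
          · simpa using hg
          · exact hm' x (by simpa using hx)
    · rintro ⟨q, rfl, hh, hc, hn, hd, ⟨l, hl, hGl⟩, hm⟩
      match q, hh with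
      | x :: t, hh =>
        simp only [List.head?_cons, Option.some.injEq] at hh
        subst hh
        match t with
        | [] =>
          simp only [List.getLast?_singleton, Option.some.injEq] at hl
          subst hl
          simp [hGl] at hg
        | b :: t' =>
          have hbE : b ∈ E x := (List.isChain_cons_cons.mp hc).1
          refine ⟨b, hbE, ?_⟩
          rw [dfs_mem]
          refine ⟨b :: t', by simp, rfl, (List.isChain_cons_cons.mp hc).2, (List.nodup_cons.mp hn).2,
            ?_, ⟨l, by simpa using hl, hGl⟩, ?_⟩
          · intro x hx
            simp only [Finset.mem_insert, not_or]
            refine ⟨fun h => (List.nodup_cons.mp hn).1 (h ▸ hx), hd x (by simp [hx])⟩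
          · intro x hx
            exact hm x (by simp only [List.dropLast_cons₂, List.mem_cons]; right; exact hx)
termination_by (Finset.univ \ visited).card
decreasing_by
  all_goals
    apply Finset.card_lt_card
    constructor
    · exact Finset.sdiff_subset_sdiff (Finset.Subset.refl _) (Finset.subset_insert _ _)
    · intro hsub
      have := hsub (Finset.mem_sdiff.mpr ⟨Finset.mem_univ _, hv⟩)
      simp at this

/-- DFS with a visited set along the current path returns exactly the simple
minimal goal paths from the initial node. -/
theorem dfs_finds_exactly_simple_minimal_goal_paths
    (E : V → Finset V) (G : V → Bool) (s : V) (p : List V) :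
    p ∈ dfs E G ∅ [] s ↔ IsSimpleMinimalGoalPath E G s p := by
  rw [dfs_mem, IsSimpleMinimalGoalPath]
  constructor
  · rintro ⟨q, rfl, hh, hc, hn, -, hg, hm⟩
    exact ⟨by simpa using hh, by simpa using hc, by simpa using hn, by simpa using hg,
      by simpa using hm⟩
  · rintro ⟨hh, hc, hn, hg, hm⟩
    exact ⟨p, by simp, hh, hc, hn, by simp, hg, hm⟩
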